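/- arXiv:1803.00265 — 2 statements merged into one kernel-verified Lean document; each statement's English description precedes it below -/
import Mathlib

section
/- Let W(I₁,I₂,I₃) be a differentiable isotropic hyperelastic energy with β₁ = (2/√I₃)·∂W/∂I₁ and β₋₁ = −2√I₃·∂W/∂I₂. Then the Cauchy shear stress in simple shear satisfies σ₁₂(γ) = (β₁ − β₋₁)(3+γ²,3+γ²,1)·γ = d/dγ [W(3+γ², 3+γ², 1)]; consequently, σ₁₂ is monotone increasing in γ for γ ≥ 0 if and only if γ ↦ W(3+γ², 3+γ², 1) is convex on [0,∞). -/
theorem stmt_16 (W : ℝ × ℝ × ℝ → ℝ) (hW : Differentiable ℝ W) :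
    let β₁ : ℝ → ℝ := fun γ =>
      (2 / Real.sqrt 1) * deriv (fun s => W (s, 3 + γ ^ 2, 1)) (3 + γ ^ 2)
    let βm : ℝ → ℝ := fun γ =>
      -(2 * Real.sqrt 1) * deriv (fun s => W (3 + γ ^ 2, s, 1)) (3 + γ ^ 2)
    let σ : ℝ → ℝ := fun γ => (β₁ γ - βm γ) * γ
    (∀ γ : ℝ, σ γ = deriv (fun t : ℝ => W (3 + t ^ 2, 3 + t ^ 2, 1)) γ) ∧
    (MonotoneOn σ (Set.Ici 0) ↔
      ConvexOn ℝ (Set.Ici 0) (fun γ : ℝ => W (3 + γ ^ 2, 3 + γ ^ 2, 1))) := by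
  intro β₁ βm σ
  set f : ℝ → ℝ := fun t : ℝ => W (3 + t ^ 2, 3 + t ^ 2, 1) with hf
  -- derivative facts
  have key : ∀ γ : ℝ, HasDerivAt f (σ γ) γ := by
    intro γ
    have hWd : HasFDerivAt W (fderiv ℝ W (3 + γ ^ 2, 3 + γ ^ 2, 1))
        (3 + γ ^ 2, 3 + γ ^ 2, 1) := (hW _).hasFDerivAt
    set L := fderiv ℝ W (3 + γ ^ 2, 3 + γ ^ 2, 1) with hL
    -- inner map t ↦ (3+t², 3+t², 1)
    have hsq : HasDerivAt (fun t : ℝ => 3 + t ^ 2) (2 * γ) γ := by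
      simpa using (hasDerivAt_pow 2 γ).const_add 3
    have hin : HasDerivAt (fun t : ℝ => ((3 + t ^ 2, 3 + t ^ 2, 1) : ℝ × ℝ × ℝ))
        ((2 * γ, 2 * γ, 0) : ℝ × ℝ × ℝ) γ :=
      HasDerivAt.prodMk hsq (HasDerivAt.prodMk hsq (hasDerivAt_const γ (1 : ℝ)))
    have hcomp : HasDerivAt f (L ((2 * γ, 2 * γ, 0) : ℝ × ℝ × ℝ)) γ :=
      hWd.comp_hasDerivAt γ hin
    -- partial derivatives
    have h1 : HasDerivAt (fun s => W (s, 3 + γ ^ 2, 1)) (L ((1, 0, 0) : ℝ × ℝ × ℝ))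
        (3 + γ ^ 2) := by
      have hin1 : HasDerivAt (fun s : ℝ => ((s, 3 + γ ^ 2, 1) : ℝ × ℝ × ℝ))
          ((1, 0, 0) : ℝ × ℝ × ℝ) (3 + γ ^ 2) :=
        HasDerivAt.prodMk (hasDerivAt_id _) (hasDerivAt_const _ _)
      exact hWd.comp_hasDerivAt _ hin1
    have h2 : HasDerivAt (fun s => W (3 + γ ^ 2, s, 1)) (L ((0, 1, 0) : ℝ × ℝ × ℝ))
        (3 + γ ^ 2) := by
      have hin2 : HasDerivAt (fun s : ℝ => ((3 + γ ^ 2, s, 1) : ℝ × ℝ × ℝ))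
          ((0, 1, 0) : ℝ × ℝ × ℝ) (3 + γ ^ 2) :=
        HasDerivAt.prodMk (hasDerivAt_const _ _) (HasDerivAt.prodMk (hasDerivAt_id _) (hasDerivAt_const _ _))
      exact hWd.comp_hasDerivAt _ hin2
    have hσ : σ γ = L ((2 * γ, 2 * γ, 0) : ℝ × ℝ × ℝ) := by
      have e : ((2 * γ, 2 * γ, 0) : ℝ × ℝ × ℝ)
          = (2 * γ) • ((1, 0, 0) : ℝ × ℝ × ℝ) + (2 * γ) • ((0, 1, 0) : ℝ × ℝ × ℝ) := by
        simp [Prod.ext_iff]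
      show (β₁ γ - βm γ) * γ = _
      rw [e, map_add, L.map_smul, L.map_smul]
      simp only [β₁, βm, h1.deriv, h2.deriv, Real.sqrt_one, smul_eq_mul]
      ring
    rw [hσ]; exact hcomp
  have hfd : Differentiable ℝ f := fun γ => (key γ).differentiableAt
  have hderiv : ∀ γ, deriv f γ = σ γ := fun γ => (key γ).deriv
  refine ⟨fun γ => (hderiv γ).symm, ?_⟩
  constructor
  · intro hmono
    refine MonotoneOn.convexOn_of_deriv (convex_Ici 0) hfd.continuous.continuousOn
      hfd.differentiableOn ?_
    intro x hx y hy hxy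
    rw [hderiv x, hderiv y]
    exact hmono (interior_subset hx) (interior_subset hy) hxy
  · intro hconv
    intro x hx y hy hxy
    rw [← hderiv x, ← hderiv y]
    exact hconv.monotoneOn_deriv (fun z _ => hfd z) hx hy hxy
end

section
/- For the energy W(I₁,I₂,I₃) = (3μα/4)[log I₁ + log I₂ − log I₃ − 2 log 3] + (μ/2)(1−α)[I₁ + 2 I₃^{-1/2} − 5] with μ > 0 and 0 < α < 1, the empirical inequalities hold on invariants of positive definite B: β₀ = (2/√I₃)(I₂·∂W/∂I₂ + I₃·∂W/∂I₃) = −μ(1−α)/I₃ < 0, β₁ = (2/√I₃)·∂W/∂I₁ > 0, and β₋₁ = −2√I₃·∂W/∂I₂ = −(3μα/2)·√I₃/I₂ ≤ 0; moreover at I₁ = I₂ = 3, I₃ = 1 the reference configuration is stress-free: ∂W/∂I₁ + 2·∂W/∂I₂ + ∂W/∂I₃ = 0 there. -/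
open Matrix

noncomputable def Cof (A : Matrix (Fin 3) (Fin 3) ℝ) : Matrix (Fin 3) (Fin 3) ℝ :=
  (Matrix.adjugate A)ᵀ

/-- The counterexample energy of Remark `pucciCounterexample`. -/
noncomputable def Wen (μ α : ℝ) (x y z : ℝ) : ℝ :=
  (3 * μ * α / 4) * (Real.log x + Real.log y - Real.log z - 2 * Real.log 3) +
    (μ / 2) * (1 - α) * (x + 2 / Real.sqrt z - 5)

lemma diag_pos' {B : Matrix (Fin 3) (Fin 3) ℝ} (hB : B.PosDef) (i : Fin 3) : 0 < B i i := by
  exact hB.diag_pos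

lemma trace_pos' {B : Matrix (Fin 3) (Fin 3) ℝ} (hB : B.PosDef) : 0 < B.trace := by
  rw [Matrix.trace]
  exact Finset.sum_pos (fun i _ => diag_pos' hB i) ⟨0, Finset.mem_univ 0⟩

lemma cof_trace_pos {B : Matrix (Fin 3) (Fin 3) ℝ} (hB : B.PosDef) : 0 < (Cof B).trace := by
  have hdet := hB.det_pos
  have hadj : B.adjugate = B.det • B⁻¹ := by
    rw [Matrix.inv_def, smul_smul, Ring.mul_inverse_cancel _ hdet.ne'.isUnit, one_smul]
  rw [Cof, Matrix.trace_transpose, hadj, Matrix.trace_smul, smul_eq_mul]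
  exact mul_pos hdet (trace_pos' hB.inv)

lemma derivX (μ α I₂ I₃ : ℝ) {x : ℝ} (hx : 0 < x) :
    deriv (fun s => Wen μ α s I₂ I₃) x = 3 * μ * α / 4 / x + μ / 2 * (1 - α) := by
  have h : HasDerivAt (fun s => Wen μ α s I₂ I₃)
      (3 * μ * α / 4 * x⁻¹ + μ / 2 * (1 - α) * 1) x := by
    unfold Wen
    exact ((((Real.hasDerivAt_log hx.ne').add_const _).sub_const _).sub_const _).const_mul _
      |>.add ((((hasDerivAt_id x).add_const _).sub_const _).const_mul _)
  rw [h.deriv]; field_simp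

lemma derivY (μ α I₁ I₃ : ℝ) {y : ℝ} (hy : 0 < y) :
    deriv (fun s => Wen μ α I₁ s I₃) y = 3 * μ * α / 4 / y := by
  have h : HasDerivAt (fun s => Wen μ α I₁ s I₃)
      (3 * μ * α / 4 * y⁻¹ + 0) y := by
    unfold Wen
    exact ((((Real.hasDerivAt_log hy.ne').const_add _).sub_const _).sub_const _).const_mul _
      |>.add (hasDerivAt_const _ _)
  rw [h.deriv]; field_simp; ring

lemma derivZ (μ α I₁ I₂ : ℝ) {z : ℝ} (hz : 0 < z) :
    deriv (fun s => Wen μ α I₁ I₂ s) z =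
      -(3 * μ * α / 4) / z - μ / 2 * (1 - α) / (z * Real.sqrt z) := by
  have hsz : Real.sqrt z ≠ 0 := (Real.sqrt_pos.mpr hz).ne'
  have hsq : HasDerivAt (fun s => 2 / Real.sqrt s)
      (2 * (-(1 / (2 * Real.sqrt z)) / (Real.sqrt z) ^ 2)) z := by
    simpa [div_eq_mul_inv] using
      (((Real.hasDerivAt_sqrt hz.ne').inv hsz).const_mul 2)
  have h : HasDerivAt (fun s => Wen μ α I₁ I₂ s)
      (3 * μ * α / 4 * (-z⁻¹) +
        μ / 2 * (1 - α) * (2 * (-(1 / (2 * Real.sqrt z)) / (Real.sqrt z) ^ 2))) z := by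
    unfold Wen
    exact ((((Real.hasDerivAt_log hz.ne').const_sub _).sub_const _).const_mul _).add
      (((hsq.const_add _).sub_const _).const_mul _)
  rw [h.deriv, Real.sq_sqrt hz.le]
  field_simp
  ring

theorem stmt_18 (μ α : ℝ) (hμ : 0 < μ) (hα0 : 0 < α) (hα1 : α < 1) :
    (∀ I₁ I₂ I₃ : ℝ,
      (∃ B : Matrix (Fin 3) (Fin 3) ℝ, B.PosDef ∧
        B.trace = I₁ ∧ (Cof B).trace = I₂ ∧ B.det = I₃) →
      ((2 / Real.sqrt I₃) *
          (I₂ * deriv (fun s => Wen μ α I₁ s I₃) I₂ +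
            I₃ * deriv (fun s => Wen μ α I₁ I₂ s) I₃) = -(μ * (1 - α)) / I₃ ∧
        (2 / Real.sqrt I₃) *
          (I₂ * deriv (fun s => Wen μ α I₁ s I₃) I₂ +
            I₃ * deriv (fun s => Wen μ α I₁ I₂ s) I₃) < 0) ∧
      0 < (2 / Real.sqrt I₃) * deriv (fun s => Wen μ α s I₂ I₃) I₁ ∧
      (-(2 * Real.sqrt I₃) * deriv (fun s => Wen μ α I₁ s I₃) I₂ =
          -(3 * μ * α / 2) * Real.sqrt I₃ / I₂ ∧
        -(2 * Real.sqrt I₃) * deriv (fun s => Wen μ α I₁ s I₃) I₂ ≤ 0)) ∧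
    deriv (fun s => Wen μ α s 3 1) 3 + 2 * deriv (fun s => Wen μ α 3 s 1) 3 +
      deriv (fun s => Wen μ α 3 3 s) 1 = 0 := by
  have hμα : 0 < μ * (1 - α) := mul_pos hμ (by linarith)
  have hμα' : 0 < μ * α := mul_pos hμ hα0
  constructor
  · rintro I₁ I₂ I₃ ⟨B, hB, h1, h2, h3⟩
    have hI1 : 0 < I₁ := h1 ▸ trace_pos' hB
    have hI2 : 0 < I₂ := h2 ▸ cof_trace_pos hB
    have hI3 : 0 < I₃ := h3 ▸ hB.det_pos
    have hs3 : 0 < Real.sqrt I₃ := Real.sqrt_pos.mpr hI3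
    have hmul : Real.sqrt I₃ * Real.sqrt I₃ = I₃ := Real.mul_self_sqrt hI3.le
    rw [derivY μ α I₁ I₃ hI2, derivZ μ α I₁ I₂ hI3]
    have hβ0 : (2 / Real.sqrt I₃) *
        (I₂ * (3 * μ * α / 4 / I₂) +
          I₃ * (-(3 * μ * α / 4) / I₃ - μ / 2 * (1 - α) / (I₃ * Real.sqrt I₃))) =
        -(μ * (1 - α)) / I₃ := by
      field_simp
      ring_nf
      rw [Real.sq_sqrt hI3.le]
    refine ⟨⟨hβ0, ?_⟩, ?_, ?_, ?_⟩
    · rw [hβ0]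
      exact div_neg_of_neg_of_pos (by linarith) hI3
    · rw [derivX μ α I₂ I₃ hI1]
      have ha : 0 < 1 - α := by linarith
      have : 0 < 3 * μ * α / 4 / I₁ + μ / 2 * (1 - α) :=
        add_pos (by positivity) (by positivity)
      exact mul_pos (by positivity) this
    · field_simp
      ring
    · rw [neg_mul, neg_nonpos]
      positivity
  · rw [derivX μ α 3 1 (by norm_num), derivY μ α 3 1 (by norm_num),
      derivZ μ α 3 3 (by norm_num)]
    simp [Real.sqrt_one]
    ring
end
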